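/- Under the assumptions of the previous statement and additionally assuming that $f$ is Lipschitz with constant $L_f$, that $x\mapsto W(x,y)$ is Lipschitz with constant $L_W$ for every $y$, and that $\mathrm{diam}(\chi)\leq 1$, the one-layer continuous MPNN output $f^{(1)}(x)=\Psi(f(x), \int_\chi \frac{W(x,y)}{d_W(x)}\Phi(f(x),f(y))\,d\mathbb{P}(y))$ is Lipschitz with constant at most $L_\Psi\frac{L_W}{d_{\min}}(\|\Phi(0,0)\|_\infty + 2L_\Phi\|f\|_\infty) + L_\Psi(1 + \frac{\|W\|_\infty}{d_{\min}}L_\Phi)L_f + L_\Psi\|W\|_\infty(\|\Phi(0,0)\|_\infty + 2L_\Phi\|f\|_\infty)\frac{L_W}{d_{\min}^2}$. -/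
import Mathlib


open MeasureTheory

/-- Lipschitz bound for one layer of a continuous MPNN with mean aggregation. -/
theorem stmt_7 {χ : Type*} [MetricSpace χ] [MeasurableSpace χ] [BorelSpace χ]
    (P : Measure χ) [IsProbabilityMeasure P]
    (F H F1 : ℕ) (W : χ → χ → ℝ) (Wmax LW dmin : ℝ)
    (hLW : 0 ≤ LW) (hdmin : 0 < dmin)
    (hdiam : ∀ x x' : χ, dist x x' ≤ 1)
    (hW0 : ∀ x y, 0 ≤ W x y) (hWb : ∀ x y, W x y ≤ Wmax)
    (hWmeas : ∀ x, Measurable (W x))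
    (hWlip : ∀ y, LipschitzWith (Real.toNNReal LW) (fun x => W x y))
    (hdeg : ∀ x, dmin ≤ ∫ y, W x y ∂P)
    (Φ : (Fin F → ℝ) → (Fin F → ℝ) → (Fin H → ℝ)) (LΦ : NNReal)
    (hΦ : LipschitzWith LΦ (fun q : (Fin F → ℝ) × (Fin F → ℝ) => Φ q.1 q.2))
    (Ψ : (Fin F → ℝ) → (Fin H → ℝ) → (Fin F1 → ℝ)) (LΨ : NNReal)
    (hΨ : LipschitzWith LΨ (fun q : (Fin F → ℝ) × (Fin H → ℝ) => Ψ q.1 q.2))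
    (f : χ → (Fin F → ℝ)) (hfmeas : Measurable f)
    (Mf : ℝ) (hfb : ∀ x, ‖f x‖ ≤ Mf)
    (Lf : NNReal) (hflip : LipschitzWith Lf f) :
    ∀ x x' : χ,
      ‖Ψ (f x) (∫ y, (W x y / (∫ y', W x y' ∂P)) • Φ (f x) (f y) ∂P)
        - Ψ (f x') (∫ y, (W x' y / (∫ y', W x' y' ∂P)) • Φ (f x') (f y) ∂P)‖
      ≤ ((LΨ : ℝ) * (LW / dmin) * (‖Φ 0 0‖ + 2 * LΦ * Mf)
          + (LΨ : ℝ) * (1 + Wmax / dmin * LΦ) * Lf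
          + (LΨ : ℝ) * Wmax * (‖Φ 0 0‖ + 2 * LΦ * Mf) * (LW / dmin ^ 2)) * dist x x' := by
  intro x x'
  have hD0 : (0:ℝ) ≤ dist x x' := dist_nonneg
  have hMf : 0 ≤ Mf := le_trans (norm_nonneg _) (hfb x)
  have hWmax : 0 ≤ Wmax := le_trans (hW0 x x) (hWb x x)
  set B : ℝ := ‖Φ 0 0‖ + 2 * (LΦ : ℝ) * Mf with hBdef
  have hB0 : 0 ≤ B := by positivity
  -- integrability of the kernel slices
  have hWint : ∀ z : χ, Integrable (W z) P := by
    intro z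
    refine (integrable_const Wmax).mono' (hWmeas z).aestronglyMeasurable ?_
    filter_upwards with y
    rw [Real.norm_eq_abs, abs_of_nonneg (hW0 z y)]
    exact hWb z y
  -- degree bounds
  have hdlb : ∀ z, dmin ≤ ∫ y, W z y ∂P := hdeg
  have hdpos : ∀ z, (0:ℝ) < ∫ y, W z y ∂P := fun z => lt_of_lt_of_le hdmin (hdlb z)
  have hWlip' : ∀ y z z', |W z y - W z' y| ≤ LW * dist z z' := by
    intro y z z'
    have h := (hWlip y).dist_le_mul z z'
    rwa [Real.dist_eq, Real.coe_toNNReal LW hLW] at h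
  have hdlip : ∀ z z', |(∫ y, W z y ∂P) - ∫ y, W z' y ∂P| ≤ LW * dist z z' := by
    intro z z'
    rw [← integral_sub (hWint z) (hWint z')]
    have h1 : ‖∫ y, (W z y - W z' y) ∂P‖ ≤ ∫ y, ‖W z y - W z' y‖ ∂P :=
      norm_integral_le_integral_norm _
    simp only [Real.norm_eq_abs] at h1
    refine le_trans h1 ?_
    calc ∫ y, |W z y - W z' y| ∂P ≤ ∫ _, LW * dist z z' ∂P := by
          refine integral_mono ((hWint z).sub (hWint z')).abs (integrable_const _) ?_
          intro y; exact hWlip' y z z'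
      _ = LW * dist z z' := by simp
  -- bound on Φ values
  have hΦfb : ∀ z y, ‖Φ (f z) (f y)‖ ≤ B := by
    intro z y
    have h1 : ‖Φ (f z) (f y)‖ ≤ ‖Φ 0 0‖ + ‖Φ (f z) (f y) - Φ 0 0‖ := by
      have := norm_add_le (Φ 0 0) (Φ (f z) (f y) - Φ 0 0)
      simpa using this
    have h2 : ‖Φ (f z) (f y) - Φ 0 0‖ ≤ (LΦ : ℝ) * (2 * Mf) := by
      have h := hΦ.dist_le_mul (f z, f y) (0, 0)
      rw [Prod.dist_eq] at h
      simp only [dist_eq_norm, sub_zero] at h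
      refine le_trans h (mul_le_mul_of_nonneg_left ?_ LΦ.coe_nonneg)
      have := hfb z; have := hfb y
      rw [max_le_iff]
      constructor <;> linarith
    have h3 : ‖Φ (f z) (f y)‖ ≤ ‖Φ 0 0‖ + (LΦ : ℝ) * (2 * Mf) := by linarith
    rw [hBdef]; nlinarith [LΦ.coe_nonneg]
  -- measurability of the Φ composition
  have hΦmeas : ∀ z, Measurable (fun y => Φ (f z) (f y)) := by
    intro z
    exact (hΦ.continuous.comp (continuous_const.prodMk continuous_id)).measurable.comp hfmeas
  -- integrability of the integrand
  have hint : ∀ z : χ, Integrable (fun y => (W z y / (∫ y', W z y' ∂P)) • Φ (f z) (f y)) P := by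
    intro z
    refine (integrable_const ((Wmax / dmin) * B)).mono'
      (((hWmeas z).div_const _).smul (hΦmeas z)).aestronglyMeasurable ?_
    filter_upwards with y
    rw [norm_smul]
    have h1 : ‖W z y / (∫ y', W z y' ∂P)‖ ≤ Wmax / dmin := by
      rw [Real.norm_eq_abs, abs_of_nonneg (div_nonneg (hW0 z y) (hdpos z).le)]
      exact div_le_div₀ hWmax (hWb z y) hdmin (hdlb z)
    exact mul_le_mul h1 (hΦfb z y) (norm_nonneg _) (by positivity)
  have hfd : dist (f x) (f x') ≤ (Lf : ℝ) * dist x x' := hflip.dist_le_mul x x'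
  set dX := ∫ y', W x y' ∂P with hdX
  set dX' := ∫ y', W x' y' ∂P with hdX'
  have hXpos : 0 < dX := hdpos x
  have hX'pos : 0 < dX' := hdpos x'
  have hXlb : dmin ≤ dX := hdlb x
  have hX'lb : dmin ≤ dX' := hdlb x'
  set C : ℝ := (LW / dmin) * B + Wmax * B * (LW / dmin ^ 2) + (Wmax / dmin) * ((LΦ : ℝ) * (Lf : ℝ))
    with hCdef
  have hC0 : 0 ≤ C := by rw [hCdef]; positivity
  have hint1 : Integrable (fun y => (W x y / dX) • Φ (f x) (f y)) P := by
    rw [hdX]; exact hint x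
  have hint2 : Integrable (fun y => (W x' y / dX') • Φ (f x') (f y)) P := by
    rw [hdX']; exact hint x'
  set gx := ∫ y, (W x y / dX) • Φ (f x) (f y) ∂P with hgx
  set gx' := ∫ y, (W x' y / dX') • Φ (f x') (f y) ∂P with hgx'
  -- key estimate on the aggregation term
  have key : ‖gx - gx'‖ ≤ C * dist x x' := by
    rw [hgx, hgx', ← integral_sub hint1 hint2]
    refine le_trans (norm_integral_le_integral_norm _) ?_
    have hpt : ∀ y, ‖(W x y / dX) • Φ (f x) (f y) - (W x' y / dX') • Φ (f x') (f y)‖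
        ≤ C * dist x x' := by
      intro y
      have hsplit : (W x y / dX) • Φ (f x) (f y) - (W x' y / dX') • Φ (f x') (f y)
          = ((W x y / dX) - (W x' y / dX')) • Φ (f x) (f y)
            + (W x' y / dX') • (Φ (f x) (f y) - Φ (f x') (f y)) := by
        rw [sub_smul, smul_sub]; abel
      rw [hsplit]
      have hab : |(W x y / dX) - (W x' y / dX')|
          ≤ LW * dist x x' / dmin + Wmax * (LW * dist x x') / (dmin * dmin) := by
        have hXne : dX ≠ 0 := ne_of_gt hXpos
        have hX'ne : dX' ≠ 0 := ne_of_gt hX'pos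
        have hid : (W x y / dX) - (W x' y / dX')
            = (W x y - W x' y) / dX + W x' y * (dX' - dX) / (dX * dX') := by
          field_simp
          ring
        rw [hid]
        refine le_trans (abs_add_le _ _) (add_le_add ?_ ?_)
        · rw [abs_div, abs_of_nonneg (le_of_lt hXpos)]
          refine div_le_div₀ (by positivity) (hWlip' y x x') hdmin hXlb
        · rw [abs_div, abs_mul, abs_of_nonneg (hW0 x' y),
            abs_of_nonneg (mul_nonneg (le_of_lt hXpos) (le_of_lt hX'pos))]
          refine div_le_div₀ (by positivity) ?_ (by positivity) ?_
          · have h := hdlip x' x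
            rw [dist_comm] at h
            exact mul_le_mul (hWb x' y) h (abs_nonneg _) hWmax
          · exact mul_le_mul hXlb hX'lb (le_of_lt hdmin) (le_of_lt hXpos)
      have hb' : |W x' y / dX'| ≤ Wmax / dmin := by
        rw [abs_of_nonneg (div_nonneg (hW0 x' y) (le_of_lt hX'pos))]
        exact div_le_div₀ hWmax (hWb x' y) hdmin hX'lb
      have huv : ‖Φ (f x) (f y) - Φ (f x') (f y)‖ ≤ (LΦ : ℝ) * ((Lf : ℝ) * dist x x') := by
        have h := hΦ.dist_le_mul (f x, f y) (f x', f y)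
        rw [Prod.dist_eq] at h
        simp only [dist_self] at h
        rw [max_eq_left dist_nonneg, dist_eq_norm] at h
        refine le_trans h (mul_le_mul_of_nonneg_left ?_ LΦ.coe_nonneg)
        exact hfd
      refine le_trans (norm_add_le _ _) ?_
      rw [norm_smul, norm_smul, Real.norm_eq_abs, Real.norm_eq_abs]
      have step : |W x y / dX - W x' y / dX'| * ‖Φ (f x) (f y)‖
            + |W x' y / dX'| * ‖Φ (f x) (f y) - Φ (f x') (f y)‖
          ≤ (LW * dist x x' / dmin + Wmax * (LW * dist x x') / (dmin * dmin)) * B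
            + (Wmax / dmin) * ((LΦ : ℝ) * ((Lf : ℝ) * dist x x')) :=
        add_le_add (mul_le_mul hab (hΦfb x y) (norm_nonneg _) (by positivity))
          (mul_le_mul hb' huv (norm_nonneg _) (by positivity))
      refine le_trans step (le_of_eq ?_)
      rw [hCdef]; ring
    calc ∫ y, ‖(W x y / dX) • Φ (f x) (f y) - (W x' y / dX') • Φ (f x') (f y)‖ ∂P
        ≤ ∫ _, C * dist x x' ∂P :=
          integral_mono (hint1.sub hint2).norm (integrable_const _) (fun y => hpt y)
      _ = C * dist x x' := by simp
  -- conclude with the Lipschitz bound on Ψ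
  have hΨd := hΨ.dist_le_mul (f x, gx) (f x', gx')
  rw [Prod.dist_eq] at hΨd
  have hgd : dist gx gx' ≤ C * dist x x' := by rw [dist_eq_norm]; exact key
  have hmax : max (dist (f x) (f x')) (dist gx gx')
      ≤ (Lf : ℝ) * dist x x' + C * dist x x' := by
    have h1 : 0 ≤ (Lf : ℝ) * dist x x' := mul_nonneg Lf.coe_nonneg hD0
    have h2 : 0 ≤ C * dist x x' := mul_nonneg hC0 hD0
    exact max_le (by linarith) (by linarith)
  calc ‖Ψ (f x) gx - Ψ (f x') gx'‖ = dist (Ψ (f x) gx) (Ψ (f x') gx') := (dist_eq_norm _ _).symm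
    _ ≤ (LΨ : ℝ) * max (dist (f x) (f x')) (dist gx gx') := hΨd
    _ ≤ (LΨ : ℝ) * ((Lf : ℝ) * dist x x' + C * dist x x') :=
        mul_le_mul_of_nonneg_left hmax LΨ.coe_nonneg
    _ = ((LΨ : ℝ) * (LW / dmin) * B
          + (LΨ : ℝ) * (1 + Wmax / dmin * (LΦ : ℝ)) * (Lf : ℝ)
          + (LΨ : ℝ) * Wmax * B * (LW / dmin ^ 2)) * dist x x' := by
        rw [hCdef]; ring
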